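/- Let r₁, r₂, r₃ be real numbers with cosh r₁ · cosh(r₁ + r₂ + r₃) > 0, and suppose l₁ > 0 satisfies the tangent law tanh²(l₁/2) = (cosh r₂ · cosh r₃)/(cosh r₁ · cosh(r₁ + r₂ + r₃)). Then cosh² r₁ ≥ 1/(4 tanh²(l₁/2)). -/
import Mathlib


theorem stmt6 (r₁ r₂ r₃ l₁ : ℝ) (hl : 0 < l₁)
    (hpos : 0 < Real.cosh r₁ * Real.cosh (r₁ + r₂ + r₃))
    (htan : Real.tanh (l₁ / 2) ^ 2 =
      (Real.cosh r₂ * Real.cosh r₃) / (Real.cosh r₁ * Real.cosh (r₁ + r₂ + r₃))) :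
    Real.cosh r₁ ^ 2 ≥ 1 / (4 * Real.tanh (l₁ / 2) ^ 2) := by
  have sinh_lt : ∀ x : ℝ, Real.sinh x < Real.cosh x := fun x => by
    nlinarith [Real.cosh_sub_sinh x, Real.exp_pos (-x)]
  have neg_lt : ∀ x : ℝ, -Real.cosh x < Real.sinh x := fun x => by
    nlinarith [Real.cosh_add_sinh x, Real.exp_pos x]
  have hc1 := Real.cosh_pos r₁
  have hc2 := Real.cosh_pos r₂
  have hc3 := Real.cosh_pos r₃
  have hcs := Real.cosh_pos (r₁ + r₂ + r₃)
  -- key inequality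
  have hkey : Real.cosh (r₁ + r₂ + r₃) < 4 * (Real.cosh r₁ * Real.cosh r₂ * Real.cosh r₃) := by
    have hexp : Real.cosh (r₁ + r₂ + r₃) =
        Real.cosh r₁ * (Real.cosh r₂ * Real.cosh r₃ + Real.sinh r₂ * Real.sinh r₃) +
        Real.sinh r₁ * (Real.sinh r₂ * Real.cosh r₃ + Real.cosh r₂ * Real.sinh r₃) := by
      rw [Real.cosh_add, Real.cosh_add, Real.sinh_add]; ring
    have p1 : (0:ℝ) < Real.cosh r₁ - Real.sinh r₁ := by linarith [sinh_lt r₁]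
    have q1 : (0:ℝ) < Real.cosh r₁ + Real.sinh r₁ := by linarith [neg_lt r₁]
    have p2 : (0:ℝ) < Real.cosh r₂ - Real.sinh r₂ := by linarith [sinh_lt r₂]
    have q2 : (0:ℝ) < Real.cosh r₂ + Real.sinh r₂ := by linarith [neg_lt r₂]
    have p3 : (0:ℝ) < Real.cosh r₃ - Real.sinh r₃ := by linarith [sinh_lt r₃]
    have q3 : (0:ℝ) < Real.cosh r₃ + Real.sinh r₃ := by linarith [neg_lt r₃]
    nlinarith [mul_pos (mul_pos p1 p2) p3, mul_pos (mul_pos p1 p2) q3,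
      mul_pos (mul_pos p1 q2) p3, mul_pos (mul_pos p1 q2) q3,
      mul_pos (mul_pos q1 p2) p3, mul_pos (mul_pos q1 p2) q3,
      mul_pos (mul_pos q1 q2) p3]
  -- tanh(l₁/2) positive
  have ht : 0 < Real.tanh (l₁ / 2) := by
    rw [Real.tanh_eq_sinh_div_cosh]
    have : 0 < Real.sinh (l₁ / 2) := by
      rw [Real.sinh_eq]
      have := Real.exp_lt_exp.mpr (show -(l₁/2) < l₁/2 by linarith)
      linarith
    exact div_pos this (Real.cosh_pos _)
  have ht2 : 0 < Real.tanh (l₁ / 2) ^ 2 := by positivity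
  rw [ge_iff_le, div_le_iff₀ (by positivity), htan]
  rw [show Real.cosh r₁ ^ 2 * (4 * (Real.cosh r₂ * Real.cosh r₃ / (Real.cosh r₁ * Real.cosh (r₁ + r₂ + r₃)))) = (4 * (Real.cosh r₁ * Real.cosh r₂ * Real.cosh r₃) * Real.cosh r₁) / (Real.cosh r₁ * Real.cosh (r₁ + r₂ + r₃)) by ring, le_div_iff₀ hpos]
  nlinarith [mul_pos hc2 hc3, mul_pos hc1 hcs, hkey]
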